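/- Let q be a prime power with q > 2, let h(x) := 1 - x^(q-2) over F_q, let g(x) := h(h(h(x))), and let a be a nonzero element of F_q. Then the map x ↦ a * g(x/a) induces on F_q the transposition (0 a): it sends 0 to a, sends a to 0, and fixes every other element of F_q. -/

import Mathlib

lemma pow_card_sub_two_eq_inv' {F : Type*} [Field F] [Fintype F]
    (hF : 2 < Fintype.card F) (x : F) (hx : x ≠ 0) :
    x ^ (Fintype.card F - 2) = x⁻¹ := by
  have h1 : x ^ (Fintype.card F - 1) = 1 := FiniteField.pow_card_sub_one_eq_one x hx
  have : x ^ (Fintype.card F - 2) * x = 1 := by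
    rw [← pow_succ]
    have : Fintype.card F - 2 + 1 = Fintype.card F - 1 := by omega
    rw [this, h1]
  field_simp at this ⊢
  linear_combination this

/-- For a finite field `F` with `q > 2` elements, let `h(x) = 1 - x^(q-2)`,
`g(x) = h(h(h(x)))`, and let `a ∈ F` be nonzero. Then the map
`x ↦ a * g(x / a)` induces the transposition `(0 a)` on `F`: it sends `0` to
`a`, `a` to `0`, and fixes every other element. -/
theorem carlitz_scaled_transposition (F : Type*) [Field F] [Fintype F]
    (hF : 2 < Fintype.card F) (a : F) (ha : a ≠ 0) (h g φ : F → F)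
    (hh : ∀ x : F, h x = 1 - x ^ (Fintype.card F - 2))
    (hg : ∀ x : F, g x = h (h (h x)))
    (hφ : ∀ x : F, φ x = a * g (x / a)) :
    φ 0 = a ∧ φ a = 0 ∧ ∀ x : F, x ≠ 0 → x ≠ a → φ x = x := by
  have h0 : h 0 = 1 := by
    rw [hh, zero_pow (by omega), sub_zero]
  have hinv : ∀ x : F, x ≠ 0 → h x = 1 - x⁻¹ := fun x hx => by
    rw [hh, pow_card_sub_two_eq_inv' hF x hx]
  have h1 : h 1 = 0 := by rw [hinv 1 one_ne_zero, inv_one, sub_self]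
  refine ⟨?_, ?_, ?_⟩
  · rw [hφ, zero_div, hg, h0, h1, h0, mul_one]
  · rw [hφ, div_self ha, hg, h1, h0, h1, mul_zero]
  · intro x hx hxa
    have hxa' : x / a ≠ 0 := div_ne_zero hx ha
    have hxa1 : x / a ≠ 1 := by
      intro hc
      exact hxa (by field_simp at hc; simpa using hc)
    set y := x / a with hy
    have hy1 : h y = (y - 1) / y := by
      rw [hinv y hxa']; field_simp
    have hy1ne : h y ≠ 0 := by
      rw [hy1]; exact div_ne_zero (sub_ne_zero.mpr hxa1) hxa'
    have hy2 : h (h y) = -1 / (y - 1) := by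
      rw [hinv _ hy1ne, hy1]
      field_simp [sub_ne_zero.mpr hxa1]
      ring
    have hy2ne : h (h y) ≠ 0 := by
      rw [hy2]
      exact div_ne_zero (neg_ne_zero.mpr one_ne_zero) (sub_ne_zero.mpr hxa1)
    have hy3 : h (h (h y)) = y := by
      rw [hinv _ hy2ne, hy2]
      field_simp [sub_ne_zero.mpr hxa1]
      ring
    rw [hφ, hg, ← hy, hy3, hy, mul_div_cancel₀ _ ha]
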